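/- arXiv:2012.03821 — 8 statements merged into one kernel-verified Lean document; each statement's English description precedes it below -/
import Mathlib

section
/- Let E be a real Banach space, P : E → E* a bounded symmetric linear operator (i.e. ⟨v₁, P v₂⟩ = ⟨v₂, P v₁⟩ for all v₁, v₂ ∈ E), and suppose E = E⁺ ⊕ E⁻ is a direct sum decomposition such that ⟨v, Pv⟩ > 0 for all nonzero v ∈ E⁺ and ⟨v, Pv⟩ < 0 for all nonzero v ∈ E⁻, with E⁻ finite-dimensional. Then there exists a unique bounded linear projector Π : E → E⁻ with range E⁻ such that ⟨w, Pv⟩ = ⟨w, P(Πv)⟩ for all w ∈ E⁻ and v ∈ E; moreover E = Ker Π ⊕ E⁻, the quadratic form V(v) := ⟨v, Pv⟩ satisfies V(v) = V(v − Πv) + V(Πv) for all v ∈ E, and P is positive on Ker Π. -/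
/-- Existence and uniqueness of the V-orthogonal projector onto the
finite-dimensional negative subspace of a symmetric bounded operator `P : E → E*`. -/
theorem stmt_0 {E : Type*} [NormedAddCommGroup E] [NormedSpace ℝ E] [CompleteSpace E]
    (P : E →L[ℝ] E →L[ℝ] ℝ)
    (hsymm : ∀ v₁ v₂ : E, P v₂ v₁ = P v₁ v₂)
    (Ep Em : Submodule ℝ E) (hcompl : IsCompl Ep Em)
    (hfd : FiniteDimensional ℝ Em)
    (hpos : ∀ v ∈ Ep, v ≠ 0 → 0 < P v v)
    (hneg : ∀ v ∈ Em, v ≠ 0 → P v v < 0) :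
    ∃ Pi : E →L[ℝ] E,
      ((∀ v : E, Pi v ∈ Em) ∧ (∀ w ∈ Em, ∀ v : E, P v w = P (Pi v) w)) ∧
      (∀ Pi' : E →L[ℝ] E,
        ((∀ v : E, Pi' v ∈ Em) ∧ (∀ w ∈ Em, ∀ v : E, P v w = P (Pi' v) w)) → Pi' = Pi) ∧
      LinearMap.range (Pi : E →ₗ[ℝ] E) = Em ∧
      (∀ v ∈ Em, Pi v = v) ∧
      IsCompl (LinearMap.ker (Pi : E →ₗ[ℝ] E)) Em ∧
      (∀ v : E, P v v = P (v - Pi v) (v - Pi v) + P (Pi v) (Pi v)) ∧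
      (∀ v : E, Pi v = 0 → v ≠ 0 → 0 < P v v) := by
  classical
  -- key cancellation lemma: a vector of `Em` orthogonal to all of `Em` is zero
  have hzero : ∀ x ∈ Em, (∀ w ∈ Em, P x w = 0) → x = 0 := by
    intro x hx h
    by_contra hx0
    exact absurd (h x hx) (ne_of_lt (hneg x hx hx0))
  -- restriction of functionals to Em
  let S : E →L[ℝ] (Em →L[ℝ] ℝ) :=
    ((ContinuousLinearMap.compL ℝ Em E ℝ).flip Em.subtypeL).comp P
  have hS : ∀ (v : E) (w : Em), S v w = P v w := fun v w => rfl
  let Tc : Em →L[ℝ] (Em →L[ℝ] ℝ) := S.comp Em.subtypeL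
  have hTinj : Function.Injective (Tc : Em →ₗ[ℝ] (Em →L[ℝ] ℝ)) := by
    rw [← LinearMap.ker_eq_bot, LinearMap.ker_eq_bot']
    intro x hxn
    have : ∀ w ∈ Em, P (x : E) w = 0 := by
      intro w hw
      have := congrArg (fun f => f ⟨w, hw⟩) hxn
      simpa [Tc, hS] using this
    exact Subtype.ext (hzero x x.2 this)
  have hdim : Module.finrank ℝ Em = Module.finrank ℝ (Em →L[ℝ] ℝ) := by
    rw [← (LinearMap.toContinuousLinearMap :
      (Em →ₗ[ℝ] ℝ) ≃ₗ[ℝ] (Em →L[ℝ] ℝ)).finrank_eq]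
    exact Subspace.dual_finrank_eq.symm
  let Teq : Em ≃ₗ[ℝ] (Em →L[ℝ] ℝ) :=
    LinearMap.linearEquivOfInjective (Tc : Em →ₗ[ℝ] (Em →L[ℝ] ℝ)) hTinj hdim
  let Pi : E →L[ℝ] E :=
    Em.subtypeL.comp ((LinearMap.toContinuousLinearMap Teq.symm.toLinearMap).comp S)
  have hPi : ∀ v : E, Pi v = (Teq.symm (S v) : E) := fun v => rfl
  have hmem : ∀ v : E, Pi v ∈ Em := fun v => (Teq.symm (S v)).2
  have horth : ∀ w ∈ Em, ∀ v : E, P v w = P (Pi v) w := by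
    intro w hw v
    have h1 : Tc (Teq.symm (S v)) = S v := by
      have := Teq.apply_symm_apply (S v)
      rwa [show Teq (Teq.symm (S v)) = Tc (Teq.symm (S v)) from
        LinearMap.linearEquivOfInjective_apply _ _ _] at this
    have := congrArg (fun f => f ⟨w, hw⟩) h1
    simpa [Tc, hS, hPi] using this.symm
  -- Pi fixes Em
  have hid : ∀ v ∈ Em, Pi v = v := by
    intro v hv
    have h1 : Pi v - v ∈ Em := Em.sub_mem (hmem v) hv
    have h2 : ∀ w ∈ Em, P (Pi v - v) w = 0 := by
      intro w hw
      have := horth w hw v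
      simp [this]
    exact sub_eq_zero.mp (hzero _ h1 h2)
  -- orthogonality of v - Pi v against Em
  have hperp : ∀ (v : E), ∀ w ∈ Em, P (v - Pi v) w = 0 := by
    intro v w hw
    have := horth w hw v
    simp [this]
  have hproj : ∀ v : E, Pi (Pi v) = Pi v := fun v => hid _ (hmem v)
  refine ⟨Pi, ⟨hmem, horth⟩, ?_, ?_, hid, ?_, ?_, ?_⟩
  · -- uniqueness
    intro Pi' ⟨hmem', horth'⟩
    ext v
    have h1 : Pi' v - Pi v ∈ Em := Em.sub_mem (hmem' v) (hmem v)
    have h2 : ∀ w ∈ Em, P (Pi' v - Pi v) w = 0 := by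
      intro w hw
      have := (horth w hw v).symm.trans (horth' w hw v)
      simp [this]
    exact sub_eq_zero.mp (hzero _ h1 h2)
  · -- range
    apply le_antisymm
    · rintro x ⟨v, rfl⟩; exact hmem v
    · intro x hx; exact ⟨x, hid x hx⟩
  · -- IsCompl (ker Pi) Em
    constructor
    · rw [disjoint_iff_inf_le]
      rintro x ⟨hk, hx⟩
      have : Pi x = 0 := hk
      rw [← hid x hx, this]
      rfl
    · rw [codisjoint_iff_le_sup]
      intro v _
      have hker : v - Pi v ∈ LinearMap.ker (Pi : E →ₗ[ℝ] E) := by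
        simp only [LinearMap.mem_ker, ContinuousLinearMap.coe_coe, map_sub, hproj, sub_self]
      exact Submodule.mem_sup.mpr ⟨v - Pi v, hker, Pi v, hmem v, by abel⟩
  · -- V decomposition
    intro v
    have h1 : P (v - Pi v) (Pi v) = 0 := hperp v _ (hmem v)
    have h2 : P (Pi v) (v - Pi v) = 0 := (hsymm _ _).symm.trans h1
    have hv : v - Pi v + Pi v = v := by abel
    conv_lhs => rw [← hv]
    simp only [map_add, ContinuousLinearMap.add_apply, h1, h2]
    ring
  · -- positivity on kernel
    intro v hPiv hv0
    obtain ⟨p, m, hp, hm, hpm⟩ := Submodule.codisjoint_iff_exists_add_eq.mp hcompl.codisjoint v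
    have hvEm : ∀ w ∈ Em, P v w = 0 := by
      intro w hw
      rw [horth w hw v, hPiv]
      simp
    have hpmm : P p m = - P m m := by
      have := hvEm m hm
      rw [← hpm] at this
      simp only [map_add, ContinuousLinearMap.add_apply] at this
      linarith
    have hkey : P v v = P p p - P m m := by
      rw [← hpm]
      simp only [map_add, ContinuousLinearMap.add_apply]
      linarith [hpmm, hsymm p m]
    rw [hkey]
    rcases eq_or_ne p 0 with hp0 | hp0
    · have hmne : m ≠ 0 := by
        intro h; apply hv0; rw [← hpm, hp0, h, add_zero]
      have := hneg m hm hmne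
      simp [hp0]; linarith
    · have h1 := hpos p hp hp0
      rcases eq_or_ne m 0 with hm0 | hm0
      · simp [hm0]; linarith
      · have := hneg m hm hm0
        linarith
end

section
/- Let E be a real Banach space, P : E → E* a bounded symmetric operator with quadratic form V(v) = ⟨v, Pv⟩ positive on E⁺ and negative on a finite-dimensional E⁻, where E = E⁺ ⊕ E⁻, and let Π : E → E⁻ be the V-orthogonal projector. Define C := inf{ (−V(ζ))^{1/2} : ζ ∈ E⁻, ‖ζ‖ = 1 }. Then C > 0 and ‖Π‖ ≤ C^{−2} ‖P‖, where ‖P‖ is the operator norm of P in L(E; E*). -/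
set_option maxHeartbeats 1000000 in
/-- Norm bound for the V-orthogonal projector:
`C := inf {√(−V ζ) : ζ ∈ E⁻, ‖ζ‖ = 1}` is positive and `‖Π‖ ≤ C⁻² ‖P‖`. -/
theorem stmt_1 {E : Type*} [NormedAddCommGroup E] [NormedSpace ℝ E] [CompleteSpace E]
    (P : E →L[ℝ] E →L[ℝ] ℝ)
    (hsymm : ∀ v₁ v₂ : E, P v₂ v₁ = P v₁ v₂)
    (Ep Em : Submodule ℝ E) (hcompl : IsCompl Ep Em)
    (hfd : FiniteDimensional ℝ Em) (hEm : Em ≠ ⊥)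
    (hpos : ∀ v ∈ Ep, v ≠ 0 → 0 < P v v)
    (hneg : ∀ v ∈ Em, v ≠ 0 → P v v < 0)
    (Pi : E →L[ℝ] E)
    (hPiMem : ∀ v : E, Pi v ∈ Em)
    (hPiId : ∀ v ∈ Em, Pi v = v)
    (hPiOrth : ∀ w ∈ Em, ∀ v : E, P v w = P (Pi v) w)
    (C : ℝ)
    (hC : C = sInf { r : ℝ | ∃ ζ : E, ζ ∈ Em ∧ ‖ζ‖ = 1 ∧ r = Real.sqrt (-(P ζ ζ)) }) :
    0 < C ∧ ‖Pi‖ ≤ C⁻¹ ^ 2 * ‖P‖ := by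
  classical
  set S := { r : ℝ | ∃ ζ : E, ζ ∈ Em ∧ ‖ζ‖ = 1 ∧ r = Real.sqrt (-(P ζ ζ)) } with hS
  have : Nontrivial Em := Submodule.nontrivial_iff_ne_bot.mpr hEm
  -- continuous function on Em
  have hf : Continuous fun ζ : Em => Real.sqrt (-(P (ζ : E) (ζ : E))) := by
    fun_prop
  -- sphere compact nonempty
  have hsph : (Metric.sphere (0 : Em) 1).Nonempty :=
    NormedSpace.sphere_nonempty.mpr (by norm_num)
  have hcpt : IsCompact (Metric.sphere (0 : Em) 1) := isCompact_sphere 0 1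
  obtain ⟨ζ₀, hζ₀mem, hmin⟩ := hcpt.exists_isMinOn hsph hf.continuousOn
  have hζ₀norm : ‖(ζ₀ : E)‖ = 1 := by
    have := mem_sphere_zero_iff_norm.mp hζ₀mem
    simpa using this
  have hζ₀ne : (ζ₀ : E) ≠ 0 := by
    intro h; rw [h] at hζ₀norm; simp at hζ₀norm
  have hζ₀neg : P (ζ₀ : E) (ζ₀ : E) < 0 := hneg _ ζ₀.2 hζ₀ne
  have hbdd : BddBelow S := ⟨0, by rintro r ⟨ζ, -, -, rfl⟩; exact Real.sqrt_nonneg _⟩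
  have hmem₀ : Real.sqrt (-(P (ζ₀ : E) (ζ₀ : E))) ∈ S := ⟨ζ₀, ζ₀.2, hζ₀norm, rfl⟩
  have hCeq : C = Real.sqrt (-(P (ζ₀ : E) (ζ₀ : E))) := by
    rw [hC]
    apply le_antisymm (csInf_le hbdd hmem₀)
    apply le_csInf ⟨_, hmem₀⟩
    rintro r ⟨ζ, hζm, hζn, rfl⟩
    have : (⟨ζ, hζm⟩ : Em) ∈ Metric.sphere (0 : Em) 1 := by
      simp [mem_sphere_zero_iff_norm, hζn]
    have h := isMinOn_iff.mp hmin ⟨ζ, hζm⟩ this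
    simpa using h
  have hCpos : 0 < C := by
    rw [hCeq]; exact Real.sqrt_pos.mpr (by linarith)
  refine ⟨hCpos, ?_⟩
  -- key: ∀ ζ ∈ Em, C^2 * ‖ζ‖^2 ≤ -(P ζ ζ)
  have key : ∀ ζ ∈ Em, C ^ 2 * ‖ζ‖ ^ 2 ≤ -(P ζ ζ) := by
    intro ζ hζ
    rcases eq_or_ne ζ 0 with rfl | hne
    · simp
    · have hn : (0:ℝ) < ‖ζ‖ := norm_pos_iff.mpr hne
      set u := ‖ζ‖⁻¹ • ζ with hu
      have hum : u ∈ Em := Em.smul_mem _ hζ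
      have hun : ‖u‖ = 1 := by
        rw [hu, norm_smul, norm_inv, norm_norm]; exact inv_mul_cancel₀ hn.ne'
      have hCle : C ≤ Real.sqrt (-(P u u)) := by
        rw [hC]; exact csInf_le hbdd ⟨u, hum, hun, rfl⟩
      have hPuu : P u u = ‖ζ‖⁻¹ ^ 2 * P ζ ζ := by
        rw [hu]; simp [map_smul]; ring
      have h2 : C ^ 2 ≤ -(P u u) := by
        have := Real.sq_sqrt (show (0:ℝ) ≤ -(P u u) from le_of_lt (by linarith [hneg u hum (by simp [hu, hne, hn.ne'])]))
        nlinarith [Real.sqrt_nonneg (-(P u u)), hCpos]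
      rw [hPuu] at h2
      have h3 : C ^ 2 ≤ ‖ζ‖⁻¹ ^ 2 * (-(P ζ ζ)) := by linarith [h2]; 
      have := mul_le_mul_of_nonneg_left h3 (le_of_lt (pow_pos hn 2))
      calc C ^ 2 * ‖ζ‖ ^ 2 = ‖ζ‖ ^ 2 * C ^ 2 := by ring
        _ ≤ ‖ζ‖ ^ 2 * (‖ζ‖⁻¹ ^ 2 * (-(P ζ ζ))) := this
        _ = -(P ζ ζ) := by field_simp
  apply ContinuousLinearMap.opNorm_le_bound _ (by positivity)
  intro v
  have hk := key (Pi v) (hPiMem v)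
  have horth : P v (Pi v) = P (Pi v) (Pi v) := hPiOrth (Pi v) (hPiMem v) v
  have hb : -(P v (Pi v)) ≤ ‖P‖ * ‖v‖ * ‖Pi v‖ := by
    have := P.le_opNorm₂ v (Pi v)
    calc -(P v (Pi v)) ≤ |P v (Pi v)| := neg_le_abs _
      _ ≤ ‖P‖ * ‖v‖ * ‖Pi v‖ := by
        calc |P v (Pi v)| = ‖P v (Pi v)‖ := rfl
          _ ≤ ‖P‖ * ‖v‖ * ‖Pi v‖ := P.le_opNorm₂ v (Pi v)
  have hchain : C ^ 2 * ‖Pi v‖ ^ 2 ≤ ‖P‖ * ‖v‖ * ‖Pi v‖ := by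
    rw [horth] at hb; linarith
  rcases eq_or_lt_of_le (norm_nonneg (Pi v)) with h0 | h0
  · rw [← h0]; positivity
  · have hC2 : (0:ℝ) < C ^ 2 := pow_pos hCpos 2
    have : C ^ 2 * ‖Pi v‖ ≤ ‖P‖ * ‖v‖ := by
      nlinarith
    rw [show C⁻¹ ^ 2 * ‖P‖ * ‖v‖ = (C ^ 2)⁻¹ * (‖P‖ * ‖v‖) by field_simp]
    rw [le_inv_mul_iff₀ hC2]
    linarith
end

section
/- (Romanov's lemma) Let E be a real Banach space, P : E → E* a bounded symmetric operator with quadratic form V positive on E⁺ and negative on finite-dimensional E⁻, E = E⁺ ⊕ E⁻ V-orthogonally (so V(v) = V(v⁺) + V(v⁻) for v = v⁺ + v⁻ with v⁺ ∈ E⁺, v⁻ ∈ E⁻), and Π the V-orthogonal projector onto E⁻. Fix κ ∈ (0,1) and define V^{(κ)}(v) := V(v⁺) + κ² V(v⁻). Suppose w₁, w₂, w₃ ∈ E satisfy V(w₁ − w₃) ≥ 0, V^{(κ)}(w₂ − w₃) ≤ 0, and Π w₁ = Π w₂. Then V(w₁⁺ − w₃⁺) ≤ (1 − κ)^{−2}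 · V(w₁⁺ − w₂⁺), where wᵢ = wᵢ⁺ + wᵢ⁻ is the V-orthogonal decomposition. -/
set_option maxHeartbeats 1000000 in
/-- Romanov's lemma: if `V(w₁ − w₃) ≥ 0`, `V^{(κ)}(w₂ − w₃) ≤ 0` and
`Π w₁ = Π w₂`, then `V(w₁⁺ − w₃⁺) ≤ (1 − κ)⁻² V(w₁⁺ − w₂⁺)`, where `x⁺ = x − Π x`. -/
theorem stmt_3 {E : Type*} [NormedAddCommGroup E] [NormedSpace ℝ E]
    (P : E →L[ℝ] E →L[ℝ] ℝ)
    (hsymm : ∀ v₁ v₂ : E, P v₂ v₁ = P v₁ v₂)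
    (Ep Em : Submodule ℝ E) (hcompl : IsCompl Ep Em)
    (hfd : FiniteDimensional ℝ Em)
    (hpos : ∀ v ∈ Ep, v ≠ 0 → 0 < P v v)
    (hneg : ∀ v ∈ Em, v ≠ 0 → P v v < 0)
    (Pi : E →L[ℝ] E)
    (hmem : ∀ v : E, Pi v ∈ Em)
    (hmemp : ∀ v : E, v - Pi v ∈ Ep)
    (hid : ∀ v ∈ Em, Pi v = v)
    (horth : ∀ v : E, P v v = P (v - Pi v) (v - Pi v) + P (Pi v) (Pi v))
    (κ : ℝ) (hκ : κ ∈ Set.Ioo (0:ℝ) 1)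
    (w₁ w₂ w₃ : E)
    (h13 : 0 ≤ P (w₁ - w₃) (w₁ - w₃))
    (h23 : P ((w₂ - w₃) - Pi (w₂ - w₃)) ((w₂ - w₃) - Pi (w₂ - w₃))
            + κ ^ 2 * P (Pi (w₂ - w₃)) (Pi (w₂ - w₃)) ≤ 0)
    (hpi : Pi w₁ = Pi w₂) :
    P ((w₁ - Pi w₁) - (w₃ - Pi w₃)) ((w₁ - Pi w₁) - (w₃ - Pi w₃)) ≤
      (1 - κ)⁻¹ ^ 2 *
        P ((w₁ - Pi w₁) - (w₂ - Pi w₂)) ((w₁ - Pi w₁) - (w₂ - Pi w₂)) := by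
  obtain ⟨hκ0, hκ1⟩ := hκ
  set a : E := (w₁ - Pi w₁) - (w₃ - Pi w₃) with ha_def
  set c : E := (w₁ - Pi w₁) - (w₂ - Pi w₂) with hc_def
  set d : E := a - c with hd_def
  set b : E := Pi (w₁ - w₃) with hb_def
  -- nonnegativity of the form on Ep
  have qnn : ∀ u ∈ Ep, 0 ≤ P u u := by
    intro u hu
    rcases eq_or_ne u 0 with rfl | h0
    · simp
    · exact (hpos u hu h0).le
  have ha_eq : a = (w₁ - w₃) - Pi (w₁ - w₃) := by
    simp only [ha_def, map_sub]; abel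
  have hc_eq : c = (w₁ - w₂) - Pi (w₁ - w₂) := by
    simp only [hc_def, map_sub, hpi]; abel
  have ha : a ∈ Ep := ha_eq ▸ hmemp _
  have hc : c ∈ Ep := hc_eq ▸ hmemp _
  have hd : d ∈ Ep := Submodule.sub_mem _ ha hc
  have hpi23 : Pi (w₂ - w₃) = b := by
    simp only [hb_def, map_sub, hpi]
  have hd_eq : (w₂ - w₃) - Pi (w₂ - w₃) = d := by
    rw [hpi23]
    simp only [hd_def, ha_eq, hc_eq, hb_def, map_sub, hpi]; abel
  -- rewrite hypotheses
  rw [horth (w₁ - w₃), ← ha_eq, ← hb_def] at h13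
  rw [hd_eq, hpi23] at h23
  set qa := P a a with hqa_def
  set qb := P b b with hqb_def
  set qc := P c c with hqc_def
  set qd := P d d with hqd_def
  have hqa : 0 ≤ qa := qnn a ha
  have hqc : 0 ≤ qc := qnn c hc
  have hqd : 0 ≤ qd := qnn d hd
  -- Cauchy–Schwarz on Ep
  have cs : (P d c) ^ 2 ≤ qd * qc := by
    have hdisc : discrim qc (2 * P d c) qd ≤ 0 := by
      apply discrim_le_zero
      intro x
      have hmem' : x • c + d ∈ Ep := Submodule.add_mem _ (Submodule.smul_mem _ _ hc) hd
      have := qnn _ hmem'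
      have hexp : P (x • c + d) (x • c + d)
          = qc * (x * x) + 2 * P d c * x + qd := by
        simp only [map_add, map_smul, ContinuousLinearMap.add_apply,
          ContinuousLinearMap.smul_apply, smul_eq_mul, hqc_def, hqd_def]
        rw [hsymm c d]
        ring
      rw [hexp] at this
      exact this
    rw [discrim] at hdisc
    nlinarith
  have hexp_a : qa = qd + 2 * P d c + qc := by
    have : a = d + c := by simp [hd_def]
    rw [hqa_def, this]
    simp only [map_add, ContinuousLinearMap.add_apply]
    rw [hsymm c d]
    ring
  set α := Real.sqrt qa with hα_def
  set γ := Real.sqrt qc with hγ_def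
  set δ := Real.sqrt qd with hδ_def
  have hα2 : α ^ 2 = qa := Real.sq_sqrt hqa
  have hγ2 : γ ^ 2 = qc := Real.sq_sqrt hqc
  have hδ2 : δ ^ 2 = qd := Real.sq_sqrt hqd
  have hα0 : 0 ≤ α := Real.sqrt_nonneg _
  have hγ0 : 0 ≤ γ := Real.sqrt_nonneg _
  have hδ0 : 0 ≤ δ := Real.sqrt_nonneg _
  -- P d c ≤ δ * γ
  have h1 : P d c ≤ δ * γ := by
    calc P d c ≤ |P d c| := le_abs_self _
      _ = Real.sqrt ((P d c) ^ 2) := (Real.sqrt_sq_eq_abs _).symm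
      _ ≤ Real.sqrt (qd * qc) := Real.sqrt_le_sqrt cs
      _ = δ * γ := Real.sqrt_mul hqd _
  -- δ ≤ κ * α
  have hqd_le : qd ≤ κ ^ 2 * qa := by nlinarith [h13, h23]
  have h2 : δ ≤ κ * α := by
    calc δ ≤ Real.sqrt (κ ^ 2 * qa) := Real.sqrt_le_sqrt hqd_le
      _ = κ * α := by
          rw [Real.sqrt_mul (sq_nonneg κ), Real.sqrt_sq hκ0.le]
  -- triangle: α ≤ δ + γ
  have h3 : α ≤ δ + γ := by
    have hqa_le : qa ≤ (δ + γ) ^ 2 := by nlinarith [hexp_a, h1, hδ2, hγ2]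
    calc α ≤ Real.sqrt ((δ + γ) ^ 2) := Real.sqrt_le_sqrt hqa_le
      _ = δ + γ := Real.sqrt_sq (by linarith)
  have h4 : (1 - κ) * α ≤ γ := by linarith [h2, h3]
  have h1κ : (0:ℝ) < 1 - κ := by linarith
  have h6 : ((1 - κ) * α) * ((1 - κ) * α) ≤ γ * γ :=
    mul_self_le_mul_self (mul_nonneg h1κ.le hα0) h4
  have h5 : (1 - κ) ^ 2 * qa ≤ qc := by nlinarith [h6, hα2, hγ2]
  rw [inv_pow, ← div_eq_inv_mul, le_div_iff₀ (by positivity)]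
  linarith [h5, mul_comm qa ((1 - κ) ^ 2)]
end

section
/- Let (λ_k)_{k≥1} be a nondecreasing sequence of positive reals tending to infinity, let 0 ≤ β ≤ α with α − β ≤ 1, fix j with λ_j < λ_{j+1}, and let ν ∈ (λ_j, λ_{j+1}). Then sup_k λ_k^{α−β} / |λ_k − ν| = max( λ_j^{α−β}/(ν − λ_j), λ_{j+1}^{α−β}/(λ_{j+1} − ν) ), and this supremum over k is minimized in ν at ν₀ = (λ_{j+1}^{α−β} λ_j + λ_j^{α−β} λ_{j+1}) / (λ_j^{α−β} + λ_{j+1}^{α−β}), where its value equals (λ_j^{α−β} + λ_{j+1}^{α−β})/(λ_{j+1} − λ_j). -/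
/-- the optimal spectral-gap computation:
`sup_k λ_k^{α−β}/|λ_k − ν| = max(λ_j^{α−β}/(ν−λ_j), λ_{j+1}^{α−β}/(λ_{j+1}−ν))` for
`ν ∈ (λ_j, λ_{j+1})`, and this max is minimized at
`ν₀ = (λ_{j+1}^{α−β} λ_j + λ_j^{α−β} λ_{j+1})/(λ_j^{α−β} + λ_{j+1}^{α−β})`, where it equals
`(λ_j^{α−β} + λ_{j+1}^{α−β})/(λ_{j+1} − λ_j)`. -/
theorem stmt_5 (l : ℕ → ℝ) (hl : Monotone l) (hlpos : ∀ k, 0 < l k)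
    (hltop : Filter.Tendsto l Filter.atTop Filter.atTop)
    (α β : ℝ) (hβ : 0 ≤ β) (hβα : β ≤ α) (hαβ : α - β ≤ 1)
    (j : ℕ) (hgap : l j < l (j + 1))
    (ν : ℝ) (hν : ν ∈ Set.Ioo (l j) (l (j + 1))) :
    (⨆ k, l k ^ (α - β) / |l k - ν|) =
      max (l j ^ (α - β) / (ν - l j)) (l (j + 1) ^ (α - β) / (l (j + 1) - ν)) ∧
    (l (j + 1) ^ (α - β) * l j + l j ^ (α - β) * l (j + 1)) /
        (l j ^ (α - β) + l (j + 1) ^ (α - β)) ∈ Set.Ioo (l j) (l (j + 1)) ∧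
    (∀ ν' ∈ Set.Ioo (l j) (l (j + 1)),
      (l j ^ (α - β) + l (j + 1) ^ (α - β)) / (l (j + 1) - l j) ≤
        max (l j ^ (α - β) / (ν' - l j)) (l (j + 1) ^ (α - β) / (l (j + 1) - ν'))) ∧
    max
        (l j ^ (α - β) /
          ((l (j + 1) ^ (α - β) * l j + l j ^ (α - β) * l (j + 1)) /
              (l j ^ (α - β) + l (j + 1) ^ (α - β)) - l j))
        (l (j + 1) ^ (α - β) /
          (l (j + 1) -
            (l (j + 1) ^ (α - β) * l j + l j ^ (α - β) * l (j + 1)) /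
              (l j ^ (α - β) + l (j + 1) ^ (α - β)))) =
      (l j ^ (α - β) + l (j + 1) ^ (α - β)) / (l (j + 1) - l j) := by
  obtain ⟨hν1, hν2⟩ := hν
  have hγ0 : 0 ≤ α - β := by linarith
  have ha : 0 < l j := hlpos j
  have hb : 0 < l (j + 1) := hlpos (j + 1)
  have hA : 0 < l j ^ (α - β) := Real.rpow_pos_of_pos ha _
  have hB : 0 < l (j + 1) ^ (α - β) := Real.rpow_pos_of_pos hb _
  have hD : 0 < l j ^ (α - β) + l (j + 1) ^ (α - β) := by linarith
  have key : ∀ k, l k ^ (α - β) / |l k - ν| ≤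
      max (l j ^ (α - β) / (ν - l j)) (l (j + 1) ^ (α - β) / (l (j + 1) - ν)) := by
    intro k
    rcases le_or_gt k j with hk | hk
    · have h1 : l k ≤ l j := hl hk
      have h2 : l k < ν := lt_of_le_of_lt h1 hν1
      have habs : |l k - ν| = ν - l k := by rw [abs_of_neg (by linarith)]; ring
      rw [habs]
      refine le_max_of_le_left ?_
      exact div_le_div₀ hA.le (Real.rpow_le_rpow (hlpos k).le h1 hγ0) (by linarith) (by linarith)
    · have h1 : l (j + 1) ≤ l k := hl (by omega)
      have h2 : ν < l k := lt_of_lt_of_le hν2 h1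
      have habs : |l k - ν| = l k - ν := abs_of_pos (by linarith)
      rw [habs]
      refine le_max_of_le_right ?_
      have ht : 0 < l k := hlpos k
      rw [div_le_div_iff₀ (by linarith) (by linarith)]
      have h3 : (l k / l (j + 1)) ^ (α - β) ≤ l k / l (j + 1) := by
        calc (l k / l (j + 1)) ^ (α - β) ≤ (l k / l (j + 1)) ^ (1 : ℝ) :=
              Real.rpow_le_rpow_of_exponent_le (by rw [le_div_iff₀ hb]; linarith) hαβ
          _ = l k / l (j + 1) := Real.rpow_one _
      have h4 : l k ^ (α - β) = l (j + 1) ^ (α - β) * (l k / l (j + 1)) ^ (α - β) := by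
        rw [← Real.mul_rpow hb.le (by positivity)]
        congr 1
        field_simp
      have h5 : l k / l (j + 1) * (l (j + 1) - ν) ≤ l k - ν := by
        rw [div_mul_eq_mul_div, div_le_iff₀ hb]
        nlinarith
      calc l k ^ (α - β) * (l (j + 1) - ν)
          = l (j + 1) ^ (α - β) * ((l k / l (j + 1)) ^ (α - β) * (l (j + 1) - ν)) := by
            rw [h4]; ring
        _ ≤ l (j + 1) ^ (α - β) * (l k / l (j + 1) * (l (j + 1) - ν)) :=
            mul_le_mul_of_nonneg_left (mul_le_mul_of_nonneg_right h3 (by linarith)) hB.le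
        _ ≤ l (j + 1) ^ (α - β) * (l k - ν) := mul_le_mul_of_nonneg_left h5 hB.le
  have hbdd : BddAbove (Set.range fun k => l k ^ (α - β) / |l k - ν|) := by
    refine ⟨max (l j ^ (α - β) / (ν - l j)) (l (j + 1) ^ (α - β) / (l (j + 1) - ν)), ?_⟩
    rintro x ⟨k, rfl⟩
    exact key k
  refine ⟨?_, ⟨?_, ?_⟩, ?_, ?_⟩
  · apply le_antisymm (ciSup_le key)
    apply max_le
    · have e1 : l j ^ (α - β) / (ν - l j) = l j ^ (α - β) / |l j - ν| := by
        rw [abs_of_neg (by linarith)]; ring_nf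
      rw [e1]
      exact le_ciSup hbdd j
    · have e2 : l (j + 1) ^ (α - β) / (l (j + 1) - ν) =
          l (j + 1) ^ (α - β) / |l (j + 1) - ν| := by
        rw [abs_of_pos (by linarith)]
      rw [e2]
      exact le_ciSup hbdd (j + 1)
  · rw [lt_div_iff₀ hD]; nlinarith
  · rw [div_lt_iff₀ hD]; nlinarith
  · rintro ν' ⟨hν'1, hν'2⟩
    by_contra hcon
    push_neg at hcon
    rw [max_lt_iff] at hcon
    obtain ⟨c1, c2⟩ := hcon
    rw [div_lt_div_iff₀ (by linarith) (by linarith)] at c1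
    rw [div_lt_div_iff₀ (by linarith) (by linarith)] at c2
    nlinarith
  · have e1 : (l (j + 1) ^ (α - β) * l j + l j ^ (α - β) * l (j + 1)) /
        (l j ^ (α - β) + l (j + 1) ^ (α - β)) - l j =
        l j ^ (α - β) * (l (j + 1) - l j) / (l j ^ (α - β) + l (j + 1) ^ (α - β)) := by
      field_simp
      ring
    have e2 : l (j + 1) - (l (j + 1) ^ (α - β) * l j + l j ^ (α - β) * l (j + 1)) /
        (l j ^ (α - β) + l (j + 1) ^ (α - β)) =
        l (j + 1) ^ (α - β) * (l (j + 1) - l j) / (l j ^ (α - β) + l (j + 1) ^ (α - β)) := by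
      field_simp
      ring
    rw [e1, e2]
    have v1 : l j ^ (α - β) /
        (l j ^ (α - β) * (l (j + 1) - l j) / (l j ^ (α - β) + l (j + 1) ^ (α - β))) =
        (l j ^ (α - β) + l (j + 1) ^ (α - β)) / (l (j + 1) - l j) := by
      rw [div_div_eq_mul_div, div_eq_div_iff (mul_pos hA (sub_pos.mpr hgap)).ne' (sub_pos.mpr hgap).ne']
      ring
    have v2 : l (j + 1) ^ (α - β) /
        (l (j + 1) ^ (α - β) * (l (j + 1) - l j) / (l j ^ (α - β) + l (j + 1) ^ (α - β))) =
        (l j ^ (α - β) + l (j + 1) ^ (α - β)) / (l (j + 1) - l j) := by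
      rw [div_div_eq_mul_div, div_eq_div_iff (mul_pos hB (sub_pos.mpr hgap)).ne' (sub_pos.mpr hgap).ne']
      ring
    rw [v1, v2, max_self]
end

section
/- (Squeezing estimate in integral form) Under the squeezing hypothesis of the previous statement with ν(t,q) = ∫₀^t ν₀(θ^s q)ds and τ = τ_V ≥ 0: if v₁, v₂ ∈ E and T ≥ τ_V satisfy V_q(ψ^T(q,v₁) − ψ^T(q,v₂)) ≥ 0, then for every t ∈ [τ_V, T], δ^{−1} V_q(v₁ − v₂) ≥ ∫₀^t e^{2ν(s,q)} ‖ψ^s(q,v₁) − ψ^s(q,v₂)‖_H² ds; in particular V_q(v₁ − v₂) ≥ 0. -/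
/-- Squeezing estimate in integral form: if the trajectories are
pseudo-ordered in the nonnegative direction at some time `T ≥ τ`, then the weighted
L² distance of the trajectories up to any `t ∈ [τ, T]` is controlled by
`δ⁻¹ V_q(v₁ − v₂)`; in particular `V_q(v₁ − v₂) ≥ 0`. -/
theorem stmt_10 {E H Q : Type*} [NormedAddCommGroup E] [NormedSpace ℝ E]
    [NormedAddCommGroup H] [InnerProductSpace ℝ H]
    (j : E →L[ℝ] H)
    (θ : ℝ → Q → Q) (ψ : ℝ → Q → E → E)
    (hθ0 : ∀ q, θ 0 q = q)
    (hθadd : ∀ t s : ℝ, 0 ≤ t → 0 ≤ s → ∀ q, θ (t + s) q = θ t (θ s q))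
    (hψ0 : ∀ q v, ψ 0 q v = v)
    (hψadd : ∀ t s : ℝ, 0 ≤ t → 0 ≤ s → ∀ q v, ψ (t + s) q v = ψ t (θ s q) (ψ s q v))
    (hψcont : ∀ q v, Continuous fun s => ψ s q v)
    (Qop : Q → E →L[ℝ] E →L[ℝ] ℝ)
    (hQsym : ∀ q (v₁ v₂ : E), Qop q v₂ v₁ = Qop q v₁ v₂)
    (V : Q → E → ℝ) (hV : ∀ q v, V q v = Qop q v v)
    (ν₀ : Q → ℝ) (νm νp : ℝ) (hν₀b : ∀ q, νm ≤ ν₀ q ∧ ν₀ q ≤ νp)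
    (hν₀meas : ∀ q, Measurable fun s : ℝ => ν₀ (θ s q))
    (ν : ℝ → Q → ℝ) (hν : ∀ t q, ν t q = ∫ s in (0:ℝ)..t, ν₀ (θ s q))
    (δ τ : ℝ) (hδ : 0 < δ) (hτ : 0 ≤ τ)
    (hsq : ∀ q (v₁ v₂ : E) (l r : ℝ), 0 ≤ l → l + τ ≤ r →
      Real.exp (2 * ν r q) * V (θ r q) (ψ r q v₁ - ψ r q v₂) -
        Real.exp (2 * ν l q) * V (θ l q) (ψ l q v₁ - ψ l q v₂) ≤
      -δ * ∫ s in l..r, Real.exp (2 * ν s q) * ‖j (ψ s q v₁ - ψ s q v₂)‖ ^ 2)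
    (q : Q) (v₁ v₂ : E) (T : ℝ) (hT : τ ≤ T)
    (hTpos : 0 ≤ V (θ T q) (ψ T q v₁ - ψ T q v₂)) :
    0 ≤ V q (v₁ - v₂) ∧
    ∀ t ∈ Set.Icc τ T,
      (∫ s in (0:ℝ)..t, Real.exp (2 * ν s q) * ‖j (ψ s q v₁ - ψ s q v₂)‖ ^ 2) ≤
        δ⁻¹ * V q (v₁ - v₂) := by
  -- integrability of ν₀ ∘ θ
  have hC : ∀ s : ℝ, |ν₀ (θ s q)| ≤ max |νm| |νp| := by
    intro s
    rcases hν₀b (θ s q) with ⟨h1, h2⟩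
    rw [abs_le]
    constructor
    · exact le_trans (neg_le_neg (le_max_left _ _)) (le_trans (neg_abs_le νm) h1)
    · exact le_trans h2 (le_trans (le_abs_self νp) (le_max_right _ _))
  have hint : ∀ a b : ℝ, IntervalIntegrable (fun s => ν₀ (θ s q)) MeasureTheory.volume a b := by
    intro a b
    rw [intervalIntegrable_iff]
    exact ⟨(hν₀meas q).aestronglyMeasurable.restrict,
      MeasureTheory.HasFiniteIntegral.restrict_of_bounded (C := max |νm| |νp|)
        measure_Ioc_lt_top (MeasureTheory.ae_restrict_of_forall_mem measurableSet_Ioc fun s _ => hC s)⟩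
  have hνcont : Continuous fun s : ℝ => ν s q := by
    have : (fun s : ℝ => ν s q) = fun b => ∫ s in (0:ℝ)..b, ν₀ (θ s q) := by
      funext b; exact hν b q
    rw [this]
    exact intervalIntegral.continuous_primitive hint 0
  set g : ℝ → ℝ := fun s => Real.exp (2 * ν s q) * ‖j (ψ s q v₁ - ψ s q v₂)‖ ^ 2 with hg
  have hgcont : Continuous g := by
    apply Continuous.mul
    · exact Real.continuous_exp.comp (continuous_const.mul hνcont)
    · exact ((j.continuous.comp ((hψcont q v₁).sub (hψcont q v₂))).norm).pow 2
  have hgnonneg : ∀ s, 0 ≤ g s := fun s =>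
    mul_nonneg (Real.exp_pos _).le (sq_nonneg _)
  have hgint : ∀ a b : ℝ, IntervalIntegrable g MeasureTheory.volume a b := fun a b =>
    hgcont.intervalIntegrable a b
  have hν00 : ν 0 q = 0 := by rw [hν, intervalIntegral.integral_same]
  -- key inequality from hsq with l = 0, r = T
  have key : ∀ r : ℝ, τ ≤ r →
      δ * ∫ s in (0:ℝ)..r, g s ≤ V q (v₁ - v₂) -
        Real.exp (2 * ν r q) * V (θ r q) (ψ r q v₁ - ψ r q v₂) := by
    intro r hr
    have h := hsq q v₁ v₂ 0 r le_rfl (by linarith)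
    rw [hν00, hθ0, hψ0, hψ0] at h
    simp only [mul_zero, Real.exp_zero, one_mul] at h
    nlinarith [h]
  have hkeyT := key T hT
  have hTexp : 0 ≤ Real.exp (2 * ν T q) * V (θ T q) (ψ T q v₁ - ψ T q v₂) :=
    mul_nonneg (Real.exp_pos _).le hTpos
  have hmono : ∀ t : ℝ, t ≤ T → (∫ s in (0:ℝ)..t, g s) ≤ ∫ s in (0:ℝ)..T, g s := by
    intro t ht
    have hsplit : (∫ s in (0:ℝ)..t, g s) + (∫ s in t..T, g s) = ∫ s in (0:ℝ)..T, g s :=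
      intervalIntegral.integral_add_adjacent_intervals (hgint 0 t) (hgint t T)
    have hpos : 0 ≤ ∫ s in t..T, g s :=
      intervalIntegral.integral_nonneg ht fun s _ => hgnonneg s
    linarith
  have hτint : 0 ≤ ∫ s in (0:ℝ)..τ, g s :=
    intervalIntegral.integral_nonneg hτ fun s _ => hgnonneg s
  have hVpos : 0 ≤ V q (v₁ - v₂) := by
    have h1 : 0 ≤ δ * ∫ s in (0:ℝ)..T, g s :=
      mul_nonneg hδ.le (le_trans hτint (hmono τ hT))
    linarith
  refine ⟨hVpos, ?_⟩
  intro t ht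
  rcases ht with ⟨ht1, ht2⟩
  have h1 : δ * ∫ s in (0:ℝ)..t, g s ≤ V q (v₁ - v₂) := by
    have := mul_le_mul_of_nonneg_left (hmono t ht2) hδ.le
    linarith
  calc (∫ s in (0:ℝ)..t, g s) ≤ δ⁻¹ * (δ * ∫ s in (0:ℝ)..t, g s) := by
        rw [inv_mul_cancel_left₀ hδ.ne']
      _ ≤ δ⁻¹ * V q (v₁ - v₂) :=
        mul_le_mul_of_nonneg_left h1 (inv_nonneg.2 hδ.le)
end

section
/- Let E be a real Banach space, and suppose for each point q in a topological space Q we have a bounded symmetric operator P(q) ∈ L(E;E*) with quadratic form V_q, a direct sum E = E⁺(q) ⊕ E⁻(q) with V_q positive on E⁺(q) and negative on the j-dimensional E⁻(q), and let Π_q be the V_q-orthogonal projector onto E⁻(q). Assume: (a) q ↦ P(q) is continuous in operator norm; (b) the (not necessarily orthogonal) projectors Π^d_q onto E⁻(q) along E⁺(q) depend continuously on q in L(E). Then q ↦ Π_q is continuous in the norm of L(E). -/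
open ContinuousLinearMap Module

set_option maxHeartbeats 2000000
set_option synthInstance.maxHeartbeats 400000

private theorem contAt_clm_comp {X : Type*} [TopologicalSpace X]
    {E F G : Type*} [NormedAddCommGroup E] [NormedSpace ℝ E]
    [NormedAddCommGroup F] [NormedSpace ℝ F]
    [NormedAddCommGroup G] [NormedSpace ℝ G]
    {g : X → F →L[ℝ] G} {f : X → E →L[ℝ] F} {x : X}
    (hg : ContinuousAt g x) (hf : ContinuousAt f x) :
    ContinuousAt (fun y => (g y).comp (f y)) x :=
  by
    have h := (isBoundedBilinearMap_comp (𝕜 := ℝ)).continuous.continuousAt.comp (hg.prodMk hf)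
    exact h

/-- continuity of the `V_q`-orthogonal projectors `Π_q` in the operator
norm, given norm-continuity of `q ↦ P(q)` and of the dichotomy projectors `q ↦ Π^d_q`. -/
theorem stmt_11 {E Q : Type*} [NormedAddCommGroup E] [NormedSpace ℝ E]
    [TopologicalSpace Q]
    (P : Q → E →L[ℝ] E →L[ℝ] ℝ) (hPcont : Continuous P)
    (hPsym : ∀ q (v₁ v₂ : E), P q v₂ v₁ = P q v₁ v₂)
    (Ep Em : Q → Submodule ℝ E)
    (hcompl : ∀ q, IsCompl (Ep q) (Em q))
    (j : ℕ) (hfd : ∀ q, FiniteDimensional ℝ (Em q))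
    (hdim : ∀ q, Module.finrank ℝ (Em q) = j)
    (hpos : ∀ q, ∀ v ∈ Ep q, v ≠ 0 → 0 < P q v v)
    (hneg : ∀ q, ∀ v ∈ Em q, v ≠ 0 → P q v v < 0)
    (Pd : Q → E →L[ℝ] E)
    (hd_mem : ∀ q v, Pd q v ∈ Em q)
    (hd_id : ∀ q, ∀ v ∈ Em q, Pd q v = v)
    (hd_ker : ∀ q, ∀ v ∈ Ep q, Pd q v = 0)
    (hd_cont : Continuous Pd)
    (Po : Q → E →L[ℝ] E)
    (ho_mem : ∀ q v, Po q v ∈ Em q)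
    (ho_id : ∀ q, ∀ v ∈ Em q, Po q v = v)
    (ho_orth : ∀ q, ∀ w ∈ Em q, ∀ v, P q v w = P q (Po q v) w) :
    Continuous Po := by
  rw [continuous_iff_continuousAt]
  intro q₀
  haveI : FiniteDimensional ℝ (Em q₀) := hfd q₀
  haveI : CompleteSpace (Em q₀) := FiniteDimensional.complete ℝ _
  set F := Em q₀ with hF
  set ι : F →L[ℝ] E := (Em q₀).subtypeL with hι
  -- restricted dichotomy projectors
  set D : Q → (F →L[ℝ] E) := fun q => (Pd q).comp ι with hD
  have hDcont : Continuous D := hd_cont.clm_comp continuous_const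
  have hDapp : ∀ q (w : F), D q w = Pd q (w : E) := fun q w => rfl
  have hD0 : ∀ w : F, D q₀ w = (w : E) := fun w => hd_id q₀ _ w.2
  -- the functional v ↦ (u ↦ P q v (D q u))
  set b : Q → (E →L[ℝ] (F →L[ℝ] ℝ)) :=
    fun q => (((compL ℝ F E ℝ).flip (D q)).comp (P q)) with hb
  have hbcont : Continuous b :=
    (((compL ℝ F E ℝ).flip.continuous.comp hDcont)).clm_comp hPcont
  have hbapp : ∀ q v (u : F), b q v u = P q v (D q u) := fun q v u => rfl
  -- the Gram operators
  set G : Q → (F →L[ℝ] (F →L[ℝ] ℝ)) := fun q => (b q).comp (D q) with hG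
  have hGcont : Continuous G := hbcont.clm_comp hDcont
  have hGapp : ∀ q (w u : F), G q w u = P q (D q w) (D q u) := fun q w u => rfl
  -- G q₀ is bijective
  have hGinj : Function.Injective (G q₀) := by
    intro w w' h
    rw [← sub_eq_zero]
    by_contra hne
    have hmem : ((w - w' : F) : E) ∈ Em q₀ := (w - w').2
    have hne' : ((w - w' : F) : E) ≠ 0 := by
      simp only [ne_eq, Submodule.coe_eq_zero]; exact hne
    have hlt := hneg q₀ _ hmem hne'
    have h0 : G q₀ (w - w') = 0 := by rw [map_sub, h, sub_self]
    have h1 : P q₀ ((w - w' : F) : E) ((w - w' : F) : E) = 0 := by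
      have := congrArg (fun f => f (w - w')) h0
      simpa [hGapp, hD0] using this
    rw [h1] at hlt
    exact lt_irrefl 0 hlt
  haveI : FiniteDimensional ℝ (F →L[ℝ] ℝ) :=
    (LinearMap.toContinuousLinearMap :
      (F →ₗ[ℝ] ℝ) ≃ₗ[ℝ] (F →L[ℝ] ℝ)).finiteDimensional
  have hfr : finrank ℝ (F →L[ℝ] ℝ) = finrank ℝ F := by
    rw [← (LinearMap.toContinuousLinearMap :
      (F →ₗ[ℝ] ℝ) ≃ₗ[ℝ] (F →L[ℝ] ℝ)).finrank_eq]
    exact Subspace.dual_finrank_eq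
  have hGsurj : Function.Surjective (G q₀) := by
    have h1 : LinearMap.range ((G q₀ : F →ₗ[ℝ] (F →L[ℝ] ℝ))) = ⊤ := by
      apply Submodule.eq_top_of_finrank_eq
      rw [LinearMap.finrank_range_of_inj (f := (G q₀ : F →ₗ[ℝ] (F →L[ℝ] ℝ)))
        (by exact hGinj)]
      exact hfr.symm
    intro y
    obtain ⟨x, hx⟩ := LinearMap.range_eq_top.1 h1 y
    exact ⟨x, hx⟩
  set e : F ≃L[ℝ] (F →L[ℝ] ℝ) :=
    (LinearEquiv.ofBijective ((G q₀ : F →ₗ[ℝ] (F →L[ℝ] ℝ)))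
      ⟨hGinj, hGsurj⟩).toContinuousLinearEquiv with he
  have heapp : ∀ w : F, e w = G q₀ w := fun w => rfl
  set c : (F →L[ℝ] ℝ) →L[ℝ] F := (e.symm : (F →L[ℝ] ℝ) →L[ℝ] F) with hc
  have hcapp : ∀ x, c x = e.symm x := fun x => rfl
  -- the endomorphisms A q
  set A : Q → (F →L[ℝ] F) := fun q => c.comp (G q) with hA
  have hAcont : Continuous A := by
    have h := ((compL ℝ F (F →L[ℝ] ℝ) F c).continuous).comp hGcont
    exact h
  have hAapp : ∀ q (w : F), A q w = e.symm (G q w) := fun q w => rfl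
  have hA0 : A q₀ = 1 := by
    refine ContinuousLinearMap.ext fun w => ?_
    rw [ContinuousLinearMap.one_apply, hAapp, ← heapp, e.symm_apply_apply]
  -- the candidate formula
  set S : Q → (E →L[ℝ] E) := fun q =>
    (D q).comp ((Ring.inverse (A q)).comp (c.comp (b q))) with hS
  have hSapp : ∀ q v, S q v = D q (Ring.inverse (A q) (e.symm (b q v))) := by
    intro q v
    simp only [hS, ContinuousLinearMap.comp_apply, hcapp]
  -- S is continuous at q₀
  have hScont : ContinuousAt S q₀ := by
    have h1 : ContinuousAt (fun q => Ring.inverse (A q)) q₀ := by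
      have h2 : ContinuousAt Ring.inverse (A q₀) := by
        rw [hA0]
        exact NormedRing.inverse_continuousAt (R := F →L[ℝ] F) 1
      exact h2.comp hAcont.continuousAt
    have hinner : Continuous fun q => c.comp (b q) :=
      ((compL ℝ E (F →L[ℝ] ℝ) F c).continuous).comp hbcont
    exact contAt_clm_comp hDcont.continuousAt
      (contAt_clm_comp h1 hinner.continuousAt)
  -- eventually A q is a unit
  have hU1 : ∀ᶠ q in nhds q₀, IsUnit (A q) := by
    have hopen : IsOpen {x : F →L[ℝ] F | IsUnit x} := Units.isOpen (R := F →L[ℝ] F)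
    have h0 : q₀ ∈ A ⁻¹' {x : F →L[ℝ] F | IsUnit x} := by
      show IsUnit (A q₀); rw [hA0]; exact isUnit_one
    exact (hopen.preimage hAcont).mem_nhds h0
  have hU2 : ∀ᶠ q in nhds q₀, ‖Pd q - Pd q₀‖ < 1 := by
    have hc : Continuous fun q => ‖Pd q - Pd q₀‖ :=
      (hd_cont.sub continuous_const).norm
    have ht : Filter.Tendsto (fun q => ‖Pd q - Pd q₀‖) (nhds q₀) (nhds 0) := by
      have h2 := hc.tendsto q₀
      simpa using h2
    exact ht.eventually_lt_const one_pos
  -- eventually S = Po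
  have hEq : ∀ᶠ q in nhds q₀, S q = Po q := by
    filter_upwards [hU1, hU2] with q hunit hnorm
    -- D q is injective
    have hkey : ∀ w : F, w ≠ 0 → D q w ≠ 0 := by
      intro w hw hzero
      have hwe : (w : E) ≠ 0 := by simpa using hw
      have h1 : D q w - (w : E) = (Pd q - Pd q₀) (w : E) := by
        rw [ContinuousLinearMap.sub_apply, hDapp, hd_id q₀ _ w.2]
      have h2 : ‖D q w - (w : E)‖ < ‖(w : E)‖ := by
        rw [h1]
        calc ‖(Pd q - Pd q₀) (w : E)‖ ≤ ‖Pd q - Pd q₀‖ * ‖(w : E)‖ :=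
              le_opNorm _ _
          _ < 1 * ‖(w : E)‖ :=
              mul_lt_mul_of_pos_right hnorm (norm_pos_iff.2 hwe)
          _ = ‖(w : E)‖ := one_mul _
      rw [hzero, zero_sub, norm_neg] at h2
      exact lt_irrefl _ h2
    have hDinj : Function.Injective (D q) := by
      intro w w' h
      by_contra hne
      exact hkey (w - w') (sub_ne_zero.2 hne) (by rw [map_sub, h, sub_self])
    -- range of D q is Em q
    haveI : FiniteDimensional ℝ (Em q) := hfd q
    have hle : LinearMap.range ((D q : F →L[ℝ] E) : F →ₗ[ℝ] E) ≤ Em q := by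
      rintro x ⟨w, rfl⟩
      exact hd_mem q _
    have hrange : LinearMap.range ((D q : F →L[ℝ] E) : F →ₗ[ℝ] E) = Em q := by
      apply Submodule.eq_of_le_of_finrank_le hle
      rw [LinearMap.finrank_range_of_inj (f := ((D q : F →L[ℝ] E) : F →ₗ[ℝ] E))
        (by exact hDinj)]
      rw [hdim q, ← hdim q₀]
    have hsurjD : ∀ w ∈ Em q, ∃ u : F, D q u = w := by
      intro w hw
      rw [← hrange] at hw
      obtain ⟨u, hu⟩ := hw
      exact ⟨u, hu⟩
    -- uniqueness of the orthogonal projection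
    have huniq : ∀ m₁ m₂ : E, m₁ ∈ Em q → m₂ ∈ Em q →
        (∀ w ∈ Em q, P q m₁ w = P q m₂ w) → m₁ = m₂ := by
      intro m₁ m₂ h₁ h₂ h
      by_contra hne
      have hdne : m₁ - m₂ ≠ 0 := sub_ne_zero.2 hne
      have hmem : m₁ - m₂ ∈ Em q := sub_mem h₁ h₂
      have hlt := hneg q _ hmem hdne
      have h0 : P q (m₁ - m₂) (m₁ - m₂) = 0 := by
        have h1 := h (m₁ - m₂) hmem
        simp only [map_sub, ContinuousLinearMap.sub_apply] at h1 ⊢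
        linarith
      rw [h0] at hlt
      exact lt_irrefl 0 hlt
    -- key inversion identity
    have hGinv : ∀ x : F →L[ℝ] ℝ, G q (Ring.inverse (A q) (e.symm x)) = x := by
      intro x
      have h1 : ∀ y : F, G q y = e (A q y) := fun y =>
        (e.apply_symm_apply (G q y)).symm
      rw [h1]
      have h2 : A q (Ring.inverse (A q) (e.symm x)) = e.symm x := by
        have h3 : A q * Ring.inverse (A q) = 1 := Ring.mul_inverse_cancel _ hunit
        calc A q (Ring.inverse (A q) (e.symm x))
            = (A q * Ring.inverse (A q)) (e.symm x) := rfl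
          _ = e.symm x := by rw [h3]; rfl
      rw [h2, e.apply_symm_apply]
    -- conclude S q = Po q
    ext v
    apply huniq (S q v) (Po q v)
    · rw [hSapp]; exact hd_mem q _
    · exact ho_mem q v
    · intro w hw
      obtain ⟨u, rfl⟩ := hsurjD w hw
      have h1 : P q (S q v) (D q u) = b q v u := by
        rw [hSapp]
        have := congrArg (fun f => f u)
          (hGinv (b q v))
        simpa [hGapp, hbapp] using this
      rw [h1, hbapp]
      exact ho_orth q (D q u) (hd_mem q _) v
  exact hScont.congr (hEq.mono fun q h => h)
end

section
/- (Cone perturbation, algebraic core) Let E be a real Banach space with symmetric P ∈ L(E;E*), V-orthogonal decomposition E = E⁺ ⊕ E⁻ with projector Π onto E⁻, ‖P‖ ≤ M_P, ‖Π‖ ≤ M_Π, and V(v) = V(Π⁺v) + V(Πv). For κ ∈ (0,1) set V^{(κ)}(v) := V(Π⁺v) + κ²V(Πv). Suppose real numbers a, b, I ≥ 0 satisfy: b − a ≤ −δ I (the unperturbed squeezing), where a = V(u), b = e^{2A}V(w) for vectors u, w ∈ E, constant A ∈ ℝ, and suppose V(Πu) ≤ 0 and I ≥ e^{−2M(τ+1)}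 e^{2A} L^{−2} ‖w‖² for constants M, τ, L > 0. If (1 − κ²) M_P M_Π² < (δ/2) e^{−2M(τ+1)} L^{−2}, then e^{2A}V^{(κ)}(w) − V^{(κ)}(u) ≤ −(δ/2) I. -/
set_option maxHeartbeats 1000000


/-- algebraic core of the Cone Perturbation Lemma: the squeezing
inequality for `V` persists, with constant `δ/2`, for the perturbed quadratic form
`V^{(κ)} = V∘Π⁺ + κ² V∘Π` when `(1 − κ²) M_P M_Π² < (δ/2) e^{−2M(τ+1)} L⁻²`. -/
theorem stmt_13 {E : Type*} [NormedAddCommGroup E] [NormedSpace ℝ E]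
    (P : E →L[ℝ] E →L[ℝ] ℝ)
    (hsymm : ∀ v₁ v₂ : E, P v₂ v₁ = P v₁ v₂)
    (Pi : E →L[ℝ] E)
    (MP MPi : ℝ) (hMP : ‖P‖ ≤ MP) (hMPi : ‖Pi‖ ≤ MPi)
    (horth : ∀ v : E, P v v = P (v - Pi v) (v - Pi v) + P (Pi v) (Pi v))
    (κ : ℝ) (hκ : κ ∈ Set.Ioo (0:ℝ) 1)
    (δ M τ L A a b I : ℝ) (hδ : 0 < δ) (hM : 0 < M) (hτ : 0 < τ) (hL : 0 < L)
    (u w : E)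
    (ha : a = P u u) (hb : b = Real.exp (2 * A) * P w w)
    (hI : 0 ≤ I)
    (hsq : b - a ≤ -δ * I)
    (hPu : P (Pi u) (Pi u) ≤ 0)
    (hIlow : Real.exp (-2 * M * (τ + 1)) * Real.exp (2 * A) * L⁻¹ ^ 2 * ‖w‖ ^ 2 ≤ I)
    (hκcond : (1 - κ ^ 2) * MP * MPi ^ 2 <
      (δ / 2) * Real.exp (-2 * M * (τ + 1)) * L⁻¹ ^ 2) :
    Real.exp (2 * A) * (P (w - Pi w) (w - Pi w) + κ ^ 2 * P (Pi w) (Pi w)) -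
      (P (u - Pi u) (u - Pi u) + κ ^ 2 * P (Pi u) (Pi u)) ≤ -(δ / 2) * I := by
  have hMP0 : 0 ≤ MP := (norm_nonneg P).trans hMP
  have hMPi0 : 0 ≤ MPi := (norm_nonneg Pi).trans hMPi
  have hE : (0:ℝ) < Real.exp (2 * A) := Real.exp_pos _
  have hQw : |P (Pi w) (Pi w)| ≤ MP * MPi ^ 2 * ‖w‖ ^ 2 := by
    have h1 : ‖P (Pi w) (Pi w)‖ ≤ ‖P‖ * ‖Pi w‖ * ‖Pi w‖ := P.le_opNorm₂ _ _
    have h2 : ‖Pi w‖ ≤ MPi * ‖w‖ :=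
      (Pi.le_opNorm w).trans (mul_le_mul_of_nonneg_right hMPi (norm_nonneg w))
    have h3 : (0:ℝ) ≤ ‖Pi w‖ := norm_nonneg _
    have h0 : (0:ℝ) ≤ ‖P‖ := norm_nonneg P
    have h4 : ‖P‖ * ‖Pi w‖ * ‖Pi w‖ ≤ MP * (MPi * ‖w‖) * (MPi * ‖w‖) :=
      mul_le_mul (mul_le_mul hMP h2 h3 hMP0) h2 h3
        (mul_nonneg hMP0 (mul_nonneg hMPi0 (norm_nonneg w)))
    calc |P (Pi w) (Pi w)| = ‖P (Pi w) (Pi w)‖ := (Real.norm_eq_abs _).symm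
      _ ≤ ‖P‖ * ‖Pi w‖ * ‖Pi w‖ := h1
      _ ≤ MP * (MPi * ‖w‖) * (MPi * ‖w‖) := h4
      _ = MP * MPi ^ 2 * ‖w‖ ^ 2 := by ring
  have hwnn : (0:ℝ) ≤ ‖w‖ ^ 2 := by positivity
  have hκ2 : (0:ℝ) ≤ 1 - κ ^ 2 := by
    have := hκ.1; have := hκ.2; nlinarith
  have hEw : (0:ℝ) ≤ Real.exp (2 * A) * ‖w‖ ^ 2 := by positivity
  have step1 : (1 - κ ^ 2) * Real.exp (2 * A) * |P (Pi w) (Pi w)|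
      ≤ (1 - κ ^ 2) * MP * MPi ^ 2 * (Real.exp (2 * A) * ‖w‖ ^ 2) := by
    have h := mul_le_mul_of_nonneg_left hQw (mul_nonneg hκ2 hE.le)
    linarith [h]
  have step2 : (1 - κ ^ 2) * MP * MPi ^ 2 * (Real.exp (2 * A) * ‖w‖ ^ 2)
      ≤ (δ / 2) * Real.exp (-2 * M * (τ + 1)) * L⁻¹ ^ 2 * (Real.exp (2 * A) * ‖w‖ ^ 2) :=
    mul_le_mul_of_nonneg_right hκcond.le hEw
  have step3 : (δ / 2) * Real.exp (-2 * M * (τ + 1)) * L⁻¹ ^ 2 * (Real.exp (2 * A) * ‖w‖ ^ 2)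
      ≤ (δ / 2) * I := by
    have h := mul_le_mul_of_nonneg_left hIlow (by linarith : (0:ℝ) ≤ δ / 2)
    linarith [h]
  have hkey : (1 - κ ^ 2) * Real.exp (2 * A) * |P (Pi w) (Pi w)| ≤ (δ / 2) * I :=
    step1.trans (step2.trans step3)
  have hw := horth w
  have hu := horth u
  have habs : -|P (Pi w) (Pi w)| ≤ P (Pi w) (Pi w) := neg_abs_le _
  have hprod : (1 - κ ^ 2) * Real.exp (2 * A) * (-|P (Pi w) (Pi w)|)
      ≤ (1 - κ ^ 2) * Real.exp (2 * A) * P (Pi w) (Pi w) :=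
    mul_le_mul_of_nonneg_left habs (mul_nonneg hκ2 hE.le)
  -- rewrite goal using orthogonality
  have goal_eq : Real.exp (2 * A) * (P (w - Pi w) (w - Pi w) + κ ^ 2 * P (Pi w) (Pi w)) -
      (P (u - Pi u) (u - Pi u) + κ ^ 2 * P (Pi u) (Pi u))
      = (b - a) - (1 - κ ^ 2) * Real.exp (2 * A) * P (Pi w) (Pi w)
        + (1 - κ ^ 2) * P (Pi u) (Pi u) := by
    have e1 : P (w - Pi w) (w - Pi w) = P w w - P (Pi w) (Pi w) := by linarith [hw]
    have e2 : P (u - Pi u) (u - Pi u) = P u u - P (Pi u) (Pi u) := by linarith [hu]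
    rw [e1, e2, ha, hb]; ring
  rw [goal_eq]
  have hκu : (1 - κ ^ 2) * P (Pi u) (Pi u) ≤ 0 := mul_nonpos_of_nonneg_of_nonpos hκ2 hPu
  linarith [hsq, hkey, hprod, hκu]
end

section
/- Let (Q, θ) be a minimal almost periodic flow on a compact metric space Q, E a Banach space, and ψ a cocycle on E over θ. If for some q₀ ∈ Q and v₀ ∈ E the forward orbit {ψ^t(q₀, v₀) : t ≥ 0} lies in a compact set K ⊆ E, then for every q ∈ Q there exists a complete trajectory w : ℝ → E over q (i.e. w(t+s) = ψ^t(θ^s q, w(s)) for all t ≥ 0, s ∈ ℝ) with w(t) ∈ K for all t ∈ ℝ. -/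
open Topology Filter


/-- in a cocycle over a minimal almost periodic (equicontinuous) flow on
a compact metric space, a forward trajectory lying in a compact set `K` yields, over
every `q`, a complete trajectory lying in `K`. -/
theorem stmt_18 {Q E : Type*} [MetricSpace Q] [CompactSpace Q]
    [NormedAddCommGroup E] [NormedSpace ℝ E]
    (θ : ℝ → Q → Q)
    (hθcont : Continuous fun p : ℝ × Q => θ p.1 p.2)
    (hθ0 : ∀ q, θ 0 q = q)
    (hθadd : ∀ t s : ℝ, ∀ q, θ (t + s) q = θ t (θ s q))
    (hmin : ∀ q : Q, Dense (Set.range fun t : ℝ => θ t q))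
    (hap : Equicontinuous fun t : ℝ => θ t)
    (ψ : ℝ → Q → E → E)
    (hψcont : ContinuousOn (fun p : ℝ × Q × E => ψ p.1 p.2.1 p.2.2)
      {p : ℝ × Q × E | 0 ≤ p.1})
    (hψ0 : ∀ q v, ψ 0 q v = v)
    (hψadd : ∀ t s : ℝ, 0 ≤ t → 0 ≤ s → ∀ q v, ψ (t + s) q v = ψ t (θ s q) (ψ s q v))
    (q₀ : Q) (v₀ : E) (K : Set E) (hK : IsCompact K)
    (horb : ∀ t : ℝ, 0 ≤ t → ψ t q₀ v₀ ∈ K) :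
    ∀ q : Q, ∃ w : ℝ → E,
      (∀ t : ℝ, 0 ≤ t → ∀ s : ℝ, w (t + s) = ψ t (θ s q) (w s)) ∧
      (∀ t : ℝ, w t ∈ K) := by
  classical
  intro q
  -- continuity of each time-s map
  have hθs : ∀ s : ℝ, Continuous fun x : Q => θ s x := fun s =>
    hθcont.comp (continuous_const.prodMk continuous_id)
  -- the omega-limit sets
  set C : ℕ → Set Q := fun n => closure ((fun t : ℝ => θ t q₀) '' Set.Ici (n : ℝ)) with hCdef
  have hCclosed : ∀ n, IsClosed (C n) := fun n => isClosed_closure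
  have hCne : ∀ n, (C n).Nonempty := fun n =>
    ⟨θ (n : ℝ) q₀, subset_closure ⟨(n : ℝ), Set.mem_Ici.mpr le_rfl, rfl⟩⟩
  have hCsub : ∀ n, C (n + 1) ⊆ C n := by
    intro n
    apply closure_mono
    apply Set.image_mono
    intro x hx
    exact le_trans (by exact_mod_cast Nat.le_succ n : (n : ℝ) ≤ ((n + 1 : ℕ) : ℝ)) hx
  -- nonempty intersection
  obtain ⟨x, hx⟩ := IsCompact.nonempty_iInter_of_sequence_nonempty_isCompact_isClosed
    C hCsub hCne (isClosed_closure.isCompact) hCclosed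
  simp only [Set.mem_iInter] at hx
  -- the intersection is invariant, hence contains a dense orbit, hence everything
  have hinv : ∀ s : ℝ, ∀ n : ℕ, θ s x ∈ C n := by
    intro s n
    obtain ⟨m, hm⟩ := exists_nat_ge ((n : ℝ) - s)
    have hxm := hx m
    have h1 : θ s x ∈ closure ((fun y => θ s y) '' ((fun t : ℝ => θ t q₀) '' Set.Ici (m : ℝ))) :=
      image_closure_subset_closure_image (hθs s) ⟨x, hxm, rfl⟩
    refine closure_mono ?_ h1
    rintro _ ⟨_, ⟨t, ht, rfl⟩, rfl⟩
    refine ⟨s + t, ?_, ?_⟩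
    · have htm : (m : ℝ) ≤ t := Set.mem_Ici.mp ht
      exact Set.mem_Ici.mpr (by linarith)
    · show θ (s + t) q₀ = θ s (θ t q₀)
      exact hθadd s t q₀
  have hq : ∀ n : ℕ, q ∈ C n := by
    intro n
    have hdense : Dense (Set.range fun s : ℝ => θ s x) := hmin x
    have hsub : Set.range (fun s : ℝ => θ s x) ⊆ C n := by
      rintro _ ⟨s, rfl⟩; exact hinv s n
    have : (Set.univ : Set Q) ⊆ C n := by
      rw [← hdense.closure_eq]
      exact (hCclosed n).closure_subset_iff.mpr hsub
    exact this (Set.mem_univ q)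
  -- choose return times
  have hτex : ∀ k : ℕ, ∃ t : ℝ, (k : ℝ) ≤ t ∧ dist q (θ t q₀) < 1 / ((k : ℝ) + 1) := by
    intro k
    have := (Metric.mem_closure_iff).mp (hq k) (1 / ((k : ℝ) + 1))
      (by positivity)
    obtain ⟨b, ⟨t, ht, rfl⟩, hb⟩ := this
    exact ⟨t, ht, hb⟩
  choose τ hτge hτdist using hτex
  have hτtop : Filter.Tendsto τ Filter.atTop Filter.atTop :=
    Filter.tendsto_atTop_mono hτge tendsto_natCast_atTop_atTop
  have hθq : Filter.Tendsto (fun k => θ (τ k) q₀) Filter.atTop (𝓝 q) := by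
    rw [tendsto_iff_dist_tendsto_zero]
    refine squeeze_zero (fun k => dist_nonneg) (fun k => ?_)
      tendsto_one_div_add_atTop_nhds_zero_nat
    rw [dist_comm]
    exact (hτdist k).le
  -- the ultrafilter
  let U : Ultrafilter ℕ := Ultrafilter.of Filter.atTop
  have hU : (U : Filter ℕ) ≤ Filter.atTop := Ultrafilter.of_le _
  -- limits exist in K
  have hex : ∀ t : ℝ, ∃ v ∈ K,
      Filter.Tendsto (fun k => ψ (t + τ k) q₀ v₀) (U : Filter ℕ) (𝓝 v) := by
    intro t
    have hmem : {k : ℕ | ψ (t + τ k) q₀ v₀ ∈ K} ∈ (U : Filter ℕ) := by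
      apply hU
      have : ∀ᶠ k in Filter.atTop, -t ≤ τ k := hτtop.eventually_ge_atTop (-t)
      filter_upwards [this] with k hk
      exact horb _ (by linarith)
    have hle : (U.map fun k => ψ (t + τ k) q₀ v₀ : Filter E) ≤ Filter.principal K := by
      rwa [Filter.le_principal_iff]
    obtain ⟨v, hvK, hv⟩ := hK.ultrafilter_le_nhds (U.map fun k => ψ (t + τ k) q₀ v₀) hle
    exact ⟨v, hvK, hv⟩
  choose w hwK hwlim using hex
  refine ⟨w, ?_, hwK⟩
  intro t ht s
  -- convergence of the base points
  have hg : Filter.Tendsto (fun k => θ s (θ (τ k) q₀)) (U : Filter ℕ) (𝓝 (θ s q)) :=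
    ((hθs s).continuousAt.tendsto).comp (hθq.mono_left hU)
  -- convergence of the triples within the half-space
  have htriple : Filter.Tendsto (fun k => ((t, θ s (θ (τ k) q₀), ψ (s + τ k) q₀ v₀) :
      ℝ × Q × E)) (U : Filter ℕ)
      (nhdsWithin ((t, θ s q, w s) : ℝ × Q × E) {p : ℝ × Q × E | 0 ≤ p.1}) := by
    rw [tendsto_nhdsWithin_iff]
    constructor
    · exact Filter.Tendsto.prodMk_nhds tendsto_const_nhds
        (Filter.Tendsto.prodMk_nhds hg (hwlim s))
    · exact Filter.Eventually.of_forall fun k => ht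
  have hcw : ContinuousWithinAt (fun p : ℝ × Q × E => ψ p.1 p.2.1 p.2.2)
      {p : ℝ × Q × E | 0 ≤ p.1} (t, θ s q, w s) := hψcont _ ht
  have T : Filter.Tendsto (fun k => ψ t (θ s (θ (τ k) q₀)) (ψ (s + τ k) q₀ v₀))
      (U : Filter ℕ) (𝓝 (ψ t (θ s q) (w s))) := hcw.tendsto.comp htriple
  -- identify along the ultrafilter
  have heq : ∀ᶠ k in (U : Filter ℕ),
      ψ (t + s + τ k) q₀ v₀ = ψ t (θ s (θ (τ k) q₀)) (ψ (s + τ k) q₀ v₀) := by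
    apply hU
    have : ∀ᶠ k in Filter.atTop, -s ≤ τ k := hτtop.eventually_ge_atTop (-s)
    filter_upwards [this] with k hk
    have h1 : t + s + τ k = t + (s + τ k) := by ring
    rw [h1, hψadd t (s + τ k) ht (by linarith), hθadd s (τ k) q₀]
  have T' : Filter.Tendsto (fun k => ψ (t + s + τ k) q₀ v₀) (U : Filter ℕ)
      (𝓝 (ψ t (θ s q) (w s))) := T.congr' (heq.mono fun k h => h.symm)
  exact tendsto_nhds_unique (hwlim (t + s)) T'
end
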